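/- (Price inversion underlying Proposition 2.) For any (x,y) ∈ Ω, set p_l = P_l(x,y) = (1−x)(R_L − f(1−x) − g(y)) + (1−x−y)·g(y) and p_a = P_a(x,y) = (1−x−y)·g(y). Then p_l ≥ p_a ≥ 0, θ_la(x,y) = 1 − x, θ_ab(y) = 1 − x − y, θ_lb(x) ≤ θ_la(x,y), and (x,y) is a market equilibrium for the prices (p_l, p_a), i.e., h̃(x,y) = (x,y). -/

import Mathlib

open Set

/-- The feasible set of market shares: Ω = {(x,y) : x ≥ 0, y ≥ 0, x + y ≤ 1}. -/
def Omega : Set (ℝ × ℝ) := {p | 0 ≤ p.1 ∧ 0 ≤ p.2 ∧ p.1 + p.2 ≤ 1}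

/-- θ_lb(x) = p_l / (R_L − f(1−x)). -/
noncomputable def thetaLB (RL : ℝ) (f : ℝ → ℝ) (pl : ℝ) (x : ℝ) : ℝ :=
  pl / (RL - f (1 - x))

/-- θ_ab(y) = p_a / g(y). -/
noncomputable def thetaAB (g : ℝ → ℝ) (pa : ℝ) (y : ℝ) : ℝ := pa / g y

/-- θ_la(x,y) = (p_l − p_a) / (R_L − f(1−x) − g(y)). -/
noncomputable def thetaLA (RL : ℝ) (f g : ℝ → ℝ) (pl pa : ℝ) (p : ℝ × ℝ) : ℝ :=
  (pl - pa) / (RL - f (1 - p.1) - g p.2)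

/-- The Stage-III update map h̃. -/
noncomputable def hmap (RL : ℝ) (f g : ℝ → ℝ) (pl pa : ℝ) (p : ℝ × ℝ) : ℝ × ℝ :=
  (max (1 - max (thetaLA RL f g pl pa p) (thetaLB RL f pl p.1)) 0,
   max (min (thetaLA RL f g pl pa p) 1 - thetaAB g pa p.2) 0)

/-- price inversion underlying Proposition 2: the price functions
P_l(x,y) = (1−x)(R_L − f(1−x) − g(y)) + (1−x−y)g(y) and P_a(x,y) = (1−x−y)g(y)
make (x,y) a market equilibrium. -/
theorem stmt8
    (RL : ℝ) (f g : ℝ → ℝ)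
    (hf_cont : ContinuousOn f (Set.Icc 0 1))
    (hf_nonneg : ∀ t ∈ Set.Icc (0:ℝ) 1, 0 ≤ f t)
    (hf_anti : AntitoneOn f (Set.Icc 0 1))
    (hg_cont : ContinuousOn g (Set.Icc 0 1))
    (hg_pos : ∀ t ∈ Set.Icc (0:ℝ) 1, 0 < g t)
    (hg_mono : MonotoneOn g (Set.Icc 0 1))
    (hRL : ∀ p ∈ Omega, f (1 - p.1) + g p.2 < RL)
    (x y : ℝ) (hmem : (x, y) ∈ Omega)
    (pl pa : ℝ)
    (hpl : pl = (1 - x) * (RL - f (1 - x) - g y) + (1 - x - y) * g y)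
    (hpa : pa = (1 - x - y) * g y) :
    pa ≤ pl ∧ 0 ≤ pa ∧
    thetaLA RL f g pl pa (x, y) = 1 - x ∧
    thetaAB g pa y = 1 - x - y ∧
    thetaLB RL f pl x ≤ thetaLA RL f g pl pa (x, y) ∧
    hmap RL f g pl pa (x, y) = (x, y) := by
  obtain ⟨hx, hy, hxy⟩ := hmem
  have hymem : y ∈ Set.Icc (0:ℝ) 1 := ⟨hy, by linarith⟩
  have hgpos : 0 < g y := hg_pos y hymem
  have hD : 0 < RL - f (1 - x) - g y := by
    have := hRL (x, y) ⟨hx, hy, hxy⟩; simp at this; linarith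
  have hE : 0 < RL - f (1 - x) := by linarith
  have h1 : pa ≤ pl := by
    rw [hpl, hpa]; nlinarith
  have h2 : 0 ≤ pa := by rw [hpa]; nlinarith
  have hla : thetaLA RL f g pl pa (x, y) = 1 - x := by
    unfold thetaLA; simp only
    rw [hpl, hpa]
    field_simp
    ring
  have hab : thetaAB g pa y = 1 - x - y := by
    unfold thetaAB; rw [hpa]; field_simp
  have hlb : thetaLB RL f pl x ≤ thetaLA RL f g pl pa (x, y) := by
    rw [hla]; unfold thetaLB
    rw [div_le_iff₀ hE, hpl]
    nlinarith
  refine ⟨h1, h2, hla, hab, hlb, ?_⟩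
  unfold hmap
  rw [hla, hab]
  have hmax : max (1 - x) (thetaLB RL f pl x) = 1 - x := max_eq_left (hla ▸ hlb)
  rw [hmax]
  have : min (1 - x) 1 = 1 - x := min_eq_left (by linarith)
  rw [this]
  simp only [Prod.mk.injEq]
  constructor
  · rw [show (1 : ℝ) - (1 - x) = x by ring]; exact max_eq_left hx
  · rw [show (1 : ℝ) - x - (1 - x - y) = y by ring]; exact max_eq_left hy
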